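/- Let x_3 < x_2 < x_1 < 0, y_1 = x_1 - x_3, y_2 = x_2 - x_3, and let p be the degree-2 real polynomial p(z) = -z^2 + (z/2)(y_1 + y_2 - x_3) + α with α defined via ∫_0^{y_2} p(s)/sqrt(R(s)) ds = 0, where sqrt(R(s)) = -sqrt(s(y_2-s)(y_1-s)) on (0, y_2). Then p has two simple real zeros z_- ∈ (0, y_2) and z_+ ∈ (y_1, ∞); moreover p(0) < 0, p(y_2) > 0, and p(y_1) > 0. -/

import Mathlib

open MeasureTheory Set intervalIntegral

private lemma inv_sqrt_le_aux {m u Q : ℝ} (hm : 0 < m) (hu : 0 < u) (hQ : m * u ≤ Q) :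
    (Real.sqrt Q)⁻¹ ≤ (Real.sqrt m)⁻¹ * u ^ (-(1:ℝ)/2) := by
  have h1 : 0 < Real.sqrt (m * u) := Real.sqrt_pos.mpr (mul_pos hm hu)
  have h2 : (Real.sqrt Q)⁻¹ ≤ (Real.sqrt (m * u))⁻¹ :=
    inv_anti₀ h1 (Real.sqrt_le_sqrt hQ)
  have h3 : u ^ (-(1:ℝ)/2) = (Real.sqrt u)⁻¹ := by
    rw [show (-(1:ℝ)/2) = -(1/2) by norm_num, Real.rpow_neg hu.le, Real.sqrt_eq_rpow]
  rw [h3, Real.sqrt_mul hm.le, mul_inv] at *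
  exact h2

private lemma w_meas (y₁ y₂ : ℝ) :
    Measurable (fun s : ℝ => (Real.sqrt (s * (y₂ - s) * (y₁ - s)))⁻¹) := by
  apply Measurable.inv
  exact (Real.continuous_sqrt.comp (by fun_prop)).measurable

private lemma w_int {y₁ y₂ : ℝ} (h0 : 0 < y₂) (h21 : y₂ < y₁) :
    IntervalIntegrable (fun s => (Real.sqrt (s * (y₂ - s) * (y₁ - s)))⁻¹) volume 0 y₂ := by
  set m : ℝ := (y₂ / 2) * (y₁ - y₂) with hm
  have hmpos : 0 < m := by rw [hm]; exact mul_pos (by linarith) (by linarith)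
  set C : ℝ := (Real.sqrt m)⁻¹ with hC
  have hCpos : 0 < C := inv_pos.mpr (Real.sqrt_pos.mpr hmpos)
  have hg : IntervalIntegrable
      (fun s : ℝ => C * (s ^ (-(1:ℝ)/2) + (y₂ - s) ^ (-(1:ℝ)/2))) volume 0 y₂ := by
    apply IntervalIntegrable.const_mul
    apply IntervalIntegrable.add
    · exact intervalIntegrable_rpow' (by norm_num)
    · have h := (intervalIntegrable_rpow' (r := -(1:ℝ)/2) (a := 0) (b := y₂)
        (by norm_num)).comp_sub_left y₂
      simpa using h.symm
  apply IntervalIntegrable.mono_fun' hg ((w_meas y₁ y₂).aestronglyMeasurable)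
  rw [uIoc_of_le h0.le]
  refine (ae_restrict_iff' measurableSet_Ioc).mpr (Filter.Eventually.of_forall fun s hs => ?_)
  obtain ⟨hs0, hsy⟩ := hs
  have hnn : (0:ℝ) ≤ (Real.sqrt (s * (y₂ - s) * (y₁ - s)))⁻¹ := by positivity
  dsimp only
  rw [Real.norm_eq_abs, abs_of_nonneg hnn]
  rcases eq_or_lt_of_le hsy with h | h
  · have : s * (y₂ - s) * (y₁ - s) = 0 := by rw [← h]; ring
    rw [this, Real.sqrt_zero, inv_zero]
    have h1 : (0:ℝ) ≤ s ^ (-(1:ℝ)/2) := Real.rpow_nonneg hs0.le _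
    have h2 : (0:ℝ) ≤ (y₂ - s) ^ (-(1:ℝ)/2) := by
      rw [← h]; simp
    positivity
  · rcases le_or_gt s (y₂ / 2) with hhalf | hhalf
    · have h1 : (y₂/2) * (y₁-y₂) ≤ (y₂-s)*(y₁-s) := by nlinarith
      have hb : m * s ≤ s * (y₂ - s) * (y₁ - s) := by
        rw [hm]; nlinarith [mul_le_mul_of_nonneg_left h1 hs0.le]
      have := inv_sqrt_le_aux hmpos hs0 hb
      have h2 : (0:ℝ) ≤ C * (y₂ - s) ^ (-(1:ℝ)/2) := by
        have := Real.rpow_nonneg (by linarith : (0:ℝ) ≤ y₂ - s) (-(1:ℝ)/2)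
        positivity
      calc (Real.sqrt (s * (y₂ - s) * (y₁ - s)))⁻¹ ≤ C * s ^ (-(1:ℝ)/2) := this
        _ ≤ C * (s ^ (-(1:ℝ)/2) + (y₂ - s) ^ (-(1:ℝ)/2)) := by nlinarith
    · have h1 : (y₂/2) * (y₁-y₂) ≤ s*(y₁-s) := by nlinarith
      have hb : m * (y₂ - s) ≤ s * (y₂ - s) * (y₁ - s) := by
        rw [hm]; nlinarith [mul_le_mul_of_nonneg_left h1 (by linarith : (0:ℝ) ≤ y₂ - s)]
      have := inv_sqrt_le_aux hmpos (by linarith : (0:ℝ) < y₂ - s) hb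
      have h2 : (0:ℝ) ≤ C * s ^ (-(1:ℝ)/2) := by
        have := Real.rpow_nonneg hs0.le (-(1:ℝ)/2)
        positivity
      calc (Real.sqrt (s * (y₂ - s) * (y₁ - s)))⁻¹ ≤ C * (y₂ - s) ^ (-(1:ℝ)/2) := this
        _ ≤ C * (s ^ (-(1:ℝ)/2) + (y₂ - s) ^ (-(1:ℝ)/2)) := by nlinarith

private lemma qw_int {y₁ y₂ : ℝ} (h0 : 0 < y₂) (h21 : y₂ < y₁) {q : ℝ → ℝ} (hq : Continuous q) :
    IntervalIntegrable (fun s => q s * (Real.sqrt (s * (y₂ - s) * (y₁ - s)))⁻¹) volume 0 y₂ := by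
  obtain ⟨M, hM⟩ := isCompact_Icc.exists_bound_of_continuousOn
    (s := Icc (0:ℝ) y₂) hq.continuousOn
  have hg : IntervalIntegrable
      (fun s : ℝ => M * (Real.sqrt (s * (y₂ - s) * (y₁ - s)))⁻¹) volume 0 y₂ :=
    (w_int h0 h21).const_mul M
  apply IntervalIntegrable.mono_fun' hg
    ((hq.measurable.mul (w_meas y₁ y₂)).aestronglyMeasurable)
  rw [uIoc_of_le h0.le]
  refine (ae_restrict_iff' measurableSet_Ioc).mpr (Filter.Eventually.of_forall fun s hs => ?_)
  have hnn : (0:ℝ) ≤ (Real.sqrt (s * (y₂ - s) * (y₁ - s)))⁻¹ := by positivity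
  have hqM : |q s| ≤ M := hM s ⟨hs.1.le, hs.2⟩
  dsimp only
  simp only [Real.norm_eq_abs, Pi.mul_apply]; rw [abs_mul, abs_of_nonneg hnn]
  exact mul_le_mul_of_nonneg_right hqM hnn


private lemma g_compare {a b q1 q2 : ℝ} (ha : 0 ≤ a) (hb : 0 ≤ b) (hq1 : 0 < q1) (hq2 : 0 < q2)
    (h : b ^ 2 * q1 ≤ a ^ 2 * q2) : b * (Real.sqrt q2)⁻¹ ≤ a * (Real.sqrt q1)⁻¹ := by
  have e1 : ∀ x q : ℝ, 0 ≤ x → 0 < q → x * (Real.sqrt q)⁻¹ = Real.sqrt (x ^ 2 / q) := by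
    intro x q hx hq
    rw [Real.sqrt_div (by positivity), Real.sqrt_sq hx, div_eq_mul_inv]
  rw [e1 a q1 ha hq1, e1 b q2 hb hq2]
  apply Real.sqrt_le_sqrt
  rw [div_le_div_iff₀ hq2 hq1]
  linarith

private lemma pointwise_pos {y₁ y₂ e d s : ℝ} (h0 : 0 < y₂) (h21 : y₂ < y₁)
    (he1 : y₂ ≤ e) (he2 : e ≤ y₁) (hd : y₂ / 2 < d) (hs0 : 0 < s) (hsy : s < y₂) :
    0 < (d - s) * ((e - s) * (Real.sqrt (s * (y₂ - s) * (y₁ - s)))⁻¹)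
      + (d - y₂ + s) * ((e - y₂ + s) * (Real.sqrt ((y₂ - s) * s * (y₁ - y₂ + s)))⁻¹) := by
  have hQ1 : 0 < s * (y₂ - s) * (y₁ - s) := by
    apply mul_pos (mul_pos hs0 (by linarith)) (by linarith)
  have hQ2 : 0 < (y₂ - s) * s * (y₁ - y₂ + s) := by
    apply mul_pos (mul_pos (by linarith) hs0) (by linarith)
  have hg1pos : 0 < (e - s) * (Real.sqrt (s * (y₂ - s) * (y₁ - s)))⁻¹ := by
    apply mul_pos (by linarith) (inv_pos.mpr (Real.sqrt_pos.mpr hQ1))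
  have hg2pos : 0 < (e - y₂ + s) * (Real.sqrt ((y₂ - s) * s * (y₁ - y₂ + s)))⁻¹ := by
    apply mul_pos (by linarith) (inv_pos.mpr (Real.sqrt_pos.mpr hQ2))
  have hP : 0 ≤ (e - y₂) * (y₁ - e) + e * (y₁ - y₂) + (y₂ - s) * s := by
    have := mul_nonneg (by linarith : (0:ℝ) ≤ e - y₂) (by linarith : (0:ℝ) ≤ y₁ - e)
    have := mul_nonneg (by linarith : (0:ℝ) ≤ e) (by linarith : (0:ℝ) ≤ y₁ - y₂)
    have := mul_nonneg (by linarith : (0:ℝ) ≤ y₂ - s) hs0.le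
    linarith
  rcases le_or_gt s (y₂ / 2) with hhalf | hhalf
  · have hint : 0 ≤ (s * (y₂ - s)) * (y₂ - 2 * s)
        * ((e - y₂) * (y₁ - e) + e * (y₁ - y₂) + (y₂ - s) * s) := by
      apply mul_nonneg (mul_nonneg (by nlinarith) (by linarith)) hP
    have hcmp : (e - y₂ + s) * (Real.sqrt ((y₂ - s) * s * (y₁ - y₂ + s)))⁻¹
        ≤ (e - s) * (Real.sqrt (s * (y₂ - s) * (y₁ - s)))⁻¹ := by
      apply g_compare (by linarith) (by linarith) hQ1 hQ2
      nlinarith [hint]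
    nlinarith [mul_nonneg (by linarith : (0:ℝ) ≤ d - s)
        (by linarith : (0:ℝ) ≤ (e - s) * (Real.sqrt (s * (y₂ - s) * (y₁ - s)))⁻¹
          - (e - y₂ + s) * (Real.sqrt ((y₂ - s) * s * (y₁ - y₂ + s)))⁻¹),
      mul_pos (by linarith : (0:ℝ) < 2 * d - y₂) hg2pos]
  · have hint : 0 ≤ (s * (y₂ - s)) * (2 * s - y₂)
        * ((e - y₂) * (y₁ - e) + e * (y₁ - y₂) + (y₂ - s) * s) := by
      apply mul_nonneg (mul_nonneg (by nlinarith) (by linarith)) hP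
    have hcmp : (e - s) * (Real.sqrt (s * (y₂ - s) * (y₁ - s)))⁻¹
        ≤ (e - y₂ + s) * (Real.sqrt ((y₂ - s) * s * (y₁ - y₂ + s)))⁻¹ := by
      apply g_compare (by linarith) (by linarith) hQ2 hQ1
      nlinarith [hint]
    nlinarith [mul_nonneg (by linarith : (0:ℝ) ≤ d - y₂ + s)
        (by linarith : (0:ℝ) ≤ (e - y₂ + s) * (Real.sqrt ((y₂ - s) * s * (y₁ - y₂ + s)))⁻¹
          - (e - s) * (Real.sqrt (s * (y₂ - s) * (y₁ - s)))⁻¹),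
      mul_pos (by linarith : (0:ℝ) < 2 * d - y₂) hg1pos]


theorem stmt_7 (x₁ x₂ x₃ : ℝ) (h32 : x₃ < x₂) (h21 : x₂ < x₁) (h10 : x₁ < 0)
    (y₁ y₂ α : ℝ) (p : ℝ → ℝ)
    (hy1 : y₁ = x₁ - x₃) (hy2 : y₂ = x₂ - x₃)
    (hp : ∀ z, p z = -z ^ 2 + (z / 2) * (y₁ + y₂ - x₃) + α)
    (hα : ∫ s in (0:ℝ)..y₂, p s / (-(Real.sqrt (s * (y₂ - s) * (y₁ - s)))) = 0) :
    (∃ zm ∈ Set.Ioo 0 y₂, ∃ zp ∈ Set.Ioi y₁,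
      p zm = 0 ∧ p zp = 0 ∧ deriv p zm ≠ 0 ∧ deriv p zp ≠ 0) ∧
    p 0 < 0 ∧ 0 < p y₂ ∧ 0 < p y₁ := by
  have hy2pos : 0 < y₂ := by rw [hy2]; linarith
  have hy21 : y₂ < y₁ := by rw [hy1, hy2]; linarith
  have hy1t : y₁ < -x₃ := by rw [hy1]; linarith
  have hy1pos : 0 < y₁ := lt_trans hy2pos hy21
  obtain ⟨w, hw⟩ : ∃ w : ℝ → ℝ, w = fun s => (Real.sqrt (s * (y₂ - s) * (y₁ - s)))⁻¹ :=
    ⟨_, rfl⟩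
  have hpc : Continuous p :=
    (by fun_prop : Continuous fun z : ℝ => -z ^ 2 + (z / 2) * (y₁ + y₂ - x₃) + α).congr
      fun z => (hp z).symm
  have hwint : IntervalIntegrable w volume 0 y₂ := by rw [hw]; exact w_int hy2pos hy21
  have hqwint : ∀ q : ℝ → ℝ, Continuous q →
      IntervalIntegrable (fun s => q s * w s) volume 0 y₂ := by
    intro q hq; rw [hw]; exact qw_int hy2pos hy21 hq
  have hwpos : ∀ s ∈ Set.Ioo (0:ℝ) y₂, 0 < w s := by
    intro s hs
    rw [hw]
    have : 0 < s * (y₂ - s) * (y₁ - s) := by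
      apply mul_pos (mul_pos hs.1 (by linarith [hs.2])) (by linarith [hs.2])
    exact inv_pos.mpr (Real.sqrt_pos.mpr this)
  have hint0 : ∫ s in (0:ℝ)..y₂, p s * w s = 0 := by
    have he : ∀ s : ℝ, p s / (-(Real.sqrt (s * (y₂ - s) * (y₁ - s)))) = -(p s * w s) := by
      intro s; rw [hw]; rw [div_neg, div_eq_mul_inv]
    simp only [he] at hα
    rw [intervalIntegral.integral_neg, neg_eq_zero] at hα
    exact hα
  have hI₀pos : 0 < ∫ s in (0:ℝ)..y₂, w s :=
    intervalIntegral_pos_of_pos_on hwint hwpos hy2pos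
  have hkey : ∀ z : ℝ, p z * ∫ s in (0:ℝ)..y₂, w s = ∫ s in (0:ℝ)..y₂, (p z - p s) * w s := by
    intro z
    have h1 : IntervalIntegrable (fun s => p z * w s) volume 0 y₂ :=
      hqwint _ continuous_const
    have h2 : IntervalIntegrable (fun s => p s * w s) volume 0 y₂ := hqwint _ hpc
    calc p z * ∫ s in (0:ℝ)..y₂, w s
        = (∫ s in (0:ℝ)..y₂, p z * w s) - ∫ s in (0:ℝ)..y₂, p s * w s := by
          rw [intervalIntegral.integral_const_mul, hint0, sub_zero]
      _ = ∫ s in (0:ℝ)..y₂, (p z * w s - p s * w s) :=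
          (intervalIntegral.integral_sub h1 h2).symm
      _ = ∫ s in (0:ℝ)..y₂, (p z - p s) * w s := by
          congr 1; funext s; ring
  -- p 0 < 0
  have hp0 : p 0 < 0 := by
    have hpos : 0 < ∫ s in (0:ℝ)..y₂, (p s - p 0) * w s := by
      apply intervalIntegral_pos_of_pos_on (hqwint _ (hpc.sub continuous_const)) ?_ hy2pos
      intro s hs
      apply mul_pos ?_ (hwpos s hs)
      simp only [Pi.sub_apply]; rw [hp s, hp 0]
      nlinarith [hs.1, hs.2, mul_pos hs.1 (show (0:ℝ) < (y₁ + y₂ - x₃) - 2 * s by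
        have := hs.2; nlinarith)]
    have heq : p 0 * ∫ s in (0:ℝ)..y₂, w s
        = - ∫ s in (0:ℝ)..y₂, (p s - p 0) * w s := by
      rw [hkey 0, ← intervalIntegral.integral_neg]
      congr 1; funext s; ring
    nlinarith
  -- generic positivity for z = y₂ and z = y₁
  have hJpos : ∀ z : ℝ, y₂ ≤ z → z ≤ y₁ → y₂ / 2 < (y₁ + y₂ - x₃) / 2 - z → 0 < p z := by
    intro z hz1 hz2 hdz
    have hGint : IntervalIntegrable (fun x => (p z - p x) * w x) volume 0 y₂ :=
      hqwint _ (continuous_const.sub hpc)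
    have hGrint : IntervalIntegrable (fun x => (p z - p (y₂ - x)) * w (y₂ - x)) volume 0 y₂ := by
      have h := hGint.comp_sub_left y₂
      simpa using h.symm
    have hrefl : (∫ x in (0:ℝ)..y₂, (p z - p (y₂ - x)) * w (y₂ - x))
        = ∫ x in (0:ℝ)..y₂, (p z - p x) * w x := by
      have h := intervalIntegral.integral_comp_sub_left
        (fun x => (p z - p x) * w x) y₂ (a := 0) (b := y₂)
      simpa using h
    have hconv : ∀ s : ℝ, (p z - p s) * w s + (p z - p (y₂ - s)) * w (y₂ - s)
        = ((y₁ + y₂ - x₃) / 2 - z - s) * ((z - s) * (Real.sqrt (s * (y₂ - s) * (y₁ - s)))⁻¹)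
          + ((y₁ + y₂ - x₃) / 2 - z - y₂ + s)
            * ((z - y₂ + s) * (Real.sqrt ((y₂ - s) * s * (y₁ - y₂ + s)))⁻¹) := by
      intro s
      have h1 : (y₂ - s) * (y₂ - (y₂ - s)) * (y₁ - (y₂ - s)) = (y₂ - s) * s * (y₁ - y₂ + s) := by
        ring
      rw [hw]
      dsimp only
      rw [h1, hp z, hp s, hp (y₂ - s)]
      ring
    have hsum : 0 < ∫ s in (0:ℝ)..y₂,
        ((p z - p s) * w s + (p z - p (y₂ - s)) * w (y₂ - s)) := by
      apply intervalIntegral_pos_of_pos_on (hGint.add hGrint) ?_ hy2pos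
      intro s hs
      rw [hconv s]
      exact pointwise_pos hy2pos hy21 hz1 hz2 hdz hs.1 hs.2
    rw [intervalIntegral.integral_add hGint hGrint, hrefl] at hsum
    have hJ : 0 < ∫ s in (0:ℝ)..y₂, (p z - p s) * w s := by linarith
    nlinarith [hkey z, hI₀pos]
  have hpy2 : 0 < p y₂ := hJpos y₂ le_rfl hy21.le (by linarith)
  have hpy1 : 0 < p y₁ := hJpos y₁ hy21.le le_rfl (by linarith)
  -- derivative formula
  have hderiv : ∀ z : ℝ, deriv p z = (y₁ + y₂ - x₃) / 2 - 2 * z := by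
    intro z
    have hpe : p = fun z => -z ^ 2 + (z / 2) * (y₁ + y₂ - x₃) + α := funext hp
    rw [hpe]
    have h1 : HasDerivAt (fun z : ℝ => -z ^ 2 + (z / 2) * (y₁ + y₂ - x₃) + α)
        (-(2 * z ^ 1) + (1 / 2) * (y₁ + y₂ - x₃)) z := by
      have hb : HasDerivAt (fun z : ℝ => z / 2) (1 / 2) z := by
        simpa using (hasDerivAt_id z).div_const 2
      exact (((hasDerivAt_pow 2 z).neg.add (hb.mul_const _)).add_const α).congr_deriv
        (by push_cast; ring)
    rw [h1.deriv]; ring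
  -- roots via IVT
  obtain ⟨zm, hzm, hpzm⟩ : ∃ zm ∈ Set.Ioo (0:ℝ) y₂, p zm = 0 := by
    have h := intermediate_value_Ioo hy2pos.le hpc.continuousOn (a := 0) (b := y₂)
    obtain ⟨zm, hzm, hpzm⟩ := h ⟨hp0, hpy2⟩
    exact ⟨zm, hzm, hpzm⟩
  set X : ℝ := (y₁ + y₂ - x₃) / 2 + y₁ + 1 with hX
  have hXy1 : y₁ < X := by
    rw [hX]; nlinarith
  have hpX : p X < 0 := by
    rw [hp X, hX]
    have hα0 : α < 0 := by have := hp 0; nlinarith [hp0]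
    nlinarith
  obtain ⟨zp, hzp, hpzp⟩ : ∃ zp ∈ Set.Ioo y₁ X, p zp = 0 := by
    have h := intermediate_value_Ioo' hXy1.le hpc.continuousOn (a := y₁) (b := X)
    obtain ⟨zp, hzp, hpzp⟩ := h ⟨hpX, hpy1⟩
    exact ⟨zp, hzp, hpzp⟩
  refine ⟨⟨zm, hzm, zp, hzp.1, hpzm, hpzp, ?_, ?_⟩, hp0, hpy2, hpy1⟩
  · rw [hderiv zm]
    intro hcon
    have h1 := hp zm
    have h2 := hp y₂
    nlinarith [hpzm, hpy2, sq_nonneg (y₂ - zm)]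
  · rw [hderiv zp]
    intro hcon
    have h1 := hp zp
    have h2 := hp y₂
    nlinarith [hpzp, hpy2, sq_nonneg (y₂ - zp)]
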